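/- Let C be a class of distributions on a countable domain X, let m ∈ ℕ, let γ, ζ ∈ (0,1), and let (V1,V2) be a pair of adaptive adversaries that successfully (γ,ζ)-confuses C-generated samples of size m. Then for every learner A : X* → Δ(X) there exists r ∈ C such that P_{S∼r^m}[d_TV(A(V1(S)), r) > γ/2] ≥ 1/2 − ζ/2 or P_{S∼r^m}[d_TV(A(V2(S)), r) > γ/2] ≥ 1/2 − ζ/2, where the probabilities include the adversaries' internal randomness. -/

import Mathlib

open scoped ENNReal NNReal

/-- Total variation distance between two discrete distributions. -/
noncomputable def tv {X : Type*} (p q : PMF X) : ℝ :=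
  (∑' x, |(p x).toReal - (q x).toReal|) / 2

/-- The distribution of an i.i.d. sample of size `m` from `p`, viewed as a multiset. -/
noncomputable def iid {X : Type*} (p : PMF X) : ℕ → PMF (Multiset X)
  | 0 => PMF.pure 0
  | n + 1 => (iid p n).bind fun s => p.map fun x => x ::ₘ s

/-- `|Q|^m` : first draw `q ∼ Q`, then an i.i.d. sample `S ∼ q^m`. -/
noncomputable def metaSample {X : Type*} (Q : PMF (PMF X)) (m : ℕ) : PMF (Multiset X) :=
  Q.bind fun q => iid q m

/-- An adaptive adversary: a randomized map from samples (finite multisets) to samples. -/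
abbrev Adversary (X : Type*) := Multiset X → PMF (Multiset X)

/-- `V(P)`: the distribution of `V S` for `S ∼ P` (including internal randomness). -/
noncomputable def advPush {X : Type*} (V : Adversary X) (P : PMF (Multiset X)) :
    PMF (Multiset X) := P.bind V

/-- An additive adversary only adds points: `S ⊆ V(S)` almost surely. -/
def IsAdditive {X : Type*} (V : Adversary X) : Prop :=
  ∀ S T, T ∈ (V S).support → S ≤ T

/-- A subtractive adversary only removes points: `V(S) ⊆ S` almost surely. -/
def IsSubtractive {X : Type*} (V : Adversary X) : Prop :=
  ∀ S T, T ∈ (V S).support → T ≤ S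

/-- Fixed constant budget `η`: `|V(S)|` depends only on `|S|` (via `c`), and for every `m`,
`η m − 1 < m·budget(V,m) ≤ η m` where `m·budget(V,m) = ||V(S)| − |S||`. -/
def FixedBudget {X : Type*} (V : Adversary X) (η : ℝ) : Prop :=
  ∃ c : ℕ → ℕ, (∀ S T, T ∈ (V S).support → Multiset.card T = c (Multiset.card S)) ∧
    ∀ m : ℕ, η * m - 1 < |(c m : ℝ) - m| ∧ |(c m : ℝ) - m| ≤ η * m

/-- Fixed constant budget `η` for an additive adversary (`m·budget(V,m) = |V(S)| − |S|`). -/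
def FixedBudgetAdd {X : Type*} (V : Adversary X) (η : ℝ) : Prop :=
  ∃ c : ℕ → ℕ, (∀ S T, T ∈ (V S).support → Multiset.card T = c (Multiset.card S)) ∧
    ∀ m : ℕ, η * m - 1 < (c m : ℝ) - m ∧ (c m : ℝ) - m ≤ η * m

/-- Fixed constant budget `η` for a subtractive adversary (`m·budget(V,m) = |S| − |V(S)|`). -/
def FixedBudgetSub {X : Type*} (V : Adversary X) (η : ℝ) : Prop :=
  ∃ c : ℕ → ℕ, (∀ S T, T ∈ (V S).support → Multiset.card T = c (Multiset.card S)) ∧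
    ∀ m : ℕ, η * m - 1 < (m : ℝ) - c m ∧ (m : ℝ) - c m ≤ η * m

/-- Probability of an event under a discrete distribution. -/
noncomputable def probEvent {β : Type*} (P : PMF β) (E : Set β) : ℝ≥0∞ :=
  P.toOuterMeasure E

/-- `A` with sample complexity `mc` learns the class `C` against adversary `V`,
up to error `bound + ε` with confidence `1 − δ` once `m ≥ mc ε δ`. -/
def RobustLearnerFor {X : Type*} (C : Set (PMF X)) (A : Multiset X → PMF X)
    (mc : ℝ → ℝ → ℕ) (V : Adversary X) (bound : ℝ) : Prop :=
  ∀ p ∈ C, ∀ ε δ : ℝ, 0 < ε → ε < 1 → 0 < δ → δ < 1 →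
    ∀ m : ℕ, mc ε δ ≤ m →
      1 - ENNReal.ofReal δ ≤
        probEvent ((iid p m).bind V) {T | tv (A T) p ≤ bound + ε}

/-- `C` is adaptively α-robustly learnable w.r.t. the single adversary `V` with budget `η`. -/
def RobustlyLearnableWrt {X : Type*} (C : Set (PMF X)) (α : ℝ)
    (V : Adversary X) (η : ℝ) : Prop :=
  ∃ A mc, RobustLearnerFor C A mc V (α * η)

/-- `V` (with budget `η`) is a universal α-adversary for `C`. -/
def UniversalAdversary {X : Type*} (C : Set (PMF X)) (α : ℝ)
    (V : Adversary X) (η : ℝ) : Prop :=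
  ¬ RobustlyLearnableWrt C α V η

/-- `C` is adaptively α-robustly learnable w.r.t. a class `𝒱` of adversaries
(each given with its budget). -/
def RobustlyLearnableWrtClass {X : Type*} (C : Set (PMF X)) (α : ℝ)
    (𝒱 : Set (Adversary X × ℝ)) : Prop :=
  ∃ A mc, ∀ Vη ∈ 𝒱, RobustLearnerFor C A mc Vη.1 (α * Vη.2)

/-- `C` is adaptively additively α-robustly learnable: one learner works simultaneously
against all additive adaptive adversaries with fixed constant budgets. -/
def AdditivelyRobustlyLearnable {X : Type*} (C : Set (PMF X)) (α : ℝ) : Prop :=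
  ∃ A mc, ∀ V : Adversary X, ∀ η : ℝ, 0 < η → η < 1 →
    IsAdditive V → FixedBudgetAdd V η → RobustLearnerFor C A mc V (α * η)

/-- `C` is adaptively subtractively α-robustly learnable. -/
def SubtractivelyRobustlyLearnable {X : Type*} (C : Set (PMF X)) (α : ℝ) : Prop :=
  ∃ A mc, ∀ V : Adversary X, ∀ η : ℝ, 0 < η → η < 1 →
    IsSubtractive V → FixedBudgetSub V η → RobustLearnerFor C A mc V (α * η)

/-- The pair `(V1, V2)` successfully `(γ,ζ)`-confuses `C`-generated samples of size `m`. -/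
def ConfusesPair {X : Type*} (C : Set (PMF X)) (V1 V2 : Adversary X)
    (γ ζ : ℝ) (m : ℕ) : Prop :=
  ∃ p ∈ C, ∃ Q : PMF (PMF X), Q.support ⊆ C ∧
    (∀ q ∈ Q.support, γ < tv p q) ∧
    tv (advPush V1 (metaSample Q m)) (advPush V2 (iid p m)) < ζ

/-- A single adversary `V` successfully `(γ,ζ)`-confuses `C`-generated samples of size `m`. -/
def Confuses {X : Type*} (C : Set (PMF X)) (V : Adversary X) (γ ζ : ℝ) (m : ℕ) : Prop :=
  ConfusesPair C V V γ ζ m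

/-- `p` is the distribution `p_{i,j,k} = (1 − 1/j)·δ_{(0,0)} + (1/j − 1/k)·U_{B_i×{2j+1}}
 + (1/k)·δ_{(i,2j+2)}` on `ℕ × ℕ`. -/
def IsPijk (B : ℕ → Finset ℕ) (i j k : ℕ) (p : PMF (ℕ × ℕ)) : Prop :=
  ∀ x : ℕ × ℕ,
    p x = (1 - ((j : ℝ≥0∞))⁻¹) * (if x = (0, 0) then 1 else 0)
      + (((j : ℝ≥0∞))⁻¹ - ((k : ℝ≥0∞))⁻¹) *
          (if x.1 ∈ B i ∧ x.2 = 2 * j + 1 then (((B i).card : ℝ≥0∞))⁻¹ else 0)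
      + ((k : ℝ≥0∞))⁻¹ * (if x = (i, 2 * j + 2) then 1 else 0)

/-- The class `C_g = {p_{i,j,g(j)} : i, j ∈ ℕ}` (for the meaningful parameters). -/
def Cg (B : ℕ → Finset ℕ) (g : ℕ → ℕ) : Set (PMF (ℕ × ℕ)) :=
  {p | ∃ i j : ℕ, 1 ≤ j ∧ j < g j ∧ (B i).Nonempty ∧ IsPijk B i j (g j) p}

/-- `g` is superlinear: `g(n)/n → ∞`. -/
def Superlinear (g : ℕ → ℕ) : Prop :=
  Filter.Tendsto (fun n => (g n : ℝ) / n) Filter.atTop Filter.atTop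

namespace Stmt4Aux

variable {X : Type*}

noncomputable def fR (p : PMF X) (x : X) : ℝ := (p x).toReal

lemma summable_fR (p : PMF X) : Summable (fR p) :=
  ENNReal.summable_toReal (by simp [p.tsum_coe])

lemma tsum_fR (p : PMF X) : ∑' x, fR p x = 1 := by
  rw [show (fR p) = fun x => (p x).toReal from rfl,
    ← ENNReal.tsum_toReal_eq (fun a => p.apply_ne_top a), p.tsum_coe, ENNReal.toReal_one]

lemma fR_nonneg (p : PMF X) (x : X) : 0 ≤ fR p x := ENNReal.toReal_nonneg

lemma summable_abs_sub (p q : PMF X) : Summable (fun x => |fR p x - fR q x|) :=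
  ((summable_fR p).sub (summable_fR q)).abs

lemma tv_eq (p q : PMF X) : tv p q = (∑' x, |fR p x - fR q x|) / 2 := rfl

lemma tv_symm (p q : PMF X) : tv p q = tv q p := by
  unfold tv; congr 1; exact tsum_congr fun x => abs_sub_comm _ _

lemma tv_triangle (p q r : PMF X) : tv p q ≤ tv p r + tv r q := by
  rw [tv_eq, tv_eq, tv_eq, ← add_div, div_le_div_iff_of_pos_right two_pos]
  calc ∑' x, |fR p x - fR q x| ≤ ∑' x, (|fR p x - fR r x| + |fR r x - fR q x|) := by
        apply Summable.tsum_le_tsum _ (summable_abs_sub p q) ((summable_abs_sub p r).add (summable_abs_sub r q))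
        intro x
        exact abs_sub_le _ _ _
    _ = _ := Summable.tsum_add (summable_abs_sub p r) (summable_abs_sub r q)

lemma probEvent_toReal (P : PMF X) (E : Set X) :
    (probEvent P E).toReal = ∑' x, E.indicator (fR P) x := by
  rw [probEvent, PMF.toOuterMeasure_apply,
    ENNReal.tsum_toReal_eq (f := fun x => E.indicator (⇑P) x)
      (fun a => by by_cases h : a ∈ E <;> simp [Set.indicator, h, P.apply_ne_top a])]
  exact tsum_congr fun x => by by_cases h : x ∈ E <;> simp [Set.indicator, h, fR]

lemma probEvent_ne_top (P : PMF X) (E : Set X) : probEvent P E ≠ ⊤ := by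
  rw [probEvent, PMF.toOuterMeasure_apply]
  refine ne_top_of_le_ne_top (by simp [P.tsum_coe])
    (ENNReal.tsum_le_tsum (f := fun x => E.indicator (⇑P) x) (g := ⇑P)
      fun x => Set.indicator_apply_le fun _ => le_rfl)

lemma probEvent_compl_toReal (P : PMF X) (E : Set X) :
    (probEvent P Eᶜ).toReal = 1 - (probEvent P E).toReal := by
  rw [probEvent_toReal, probEvent_toReal, eq_sub_iff_add_eq]
  rw [← Summable.tsum_add (((summable_fR P).indicator Eᶜ)) ((summable_fR P).indicator E)]
  rw [← tsum_fR P]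
  exact tsum_congr fun x => by by_cases h : x ∈ E <;> simp [Set.indicator, h]

lemma indicator_tsum_le_half (d : X → ℝ) (hsd : Summable d) (htd : ∑' x, d x = 0)
    (E : Set X) : ∑' x, E.indicator d x ≤ (∑' x, |d x|) / 2 := by
  have hsad : Summable (fun x => |d x|) := hsd.abs
  have h2 : ∑' x, E.indicator d x ≤ ∑' x, (|d x| + d x) / 2 := by
    refine Summable.tsum_le_tsum (fun x => ?_) (hsd.indicator E) ((hsad.add hsd).div_const 2)
    by_cases h : x ∈ E
    · simp only [Set.indicator_of_mem h]
      rcases abs_cases (d x) with ⟨h1,h2⟩|⟨h1,h2⟩ <;> linarith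
    · simp only [Set.indicator_of_notMem h]
      rcases abs_cases (d x) with ⟨h1,h2⟩|⟨h1,h2⟩ <;> linarith
  calc ∑' x, E.indicator d x ≤ ∑' x, (|d x| + d x) / 2 := h2
    _ = (∑' x, |d x|) / 2 := by rw [tsum_div_const, Summable.tsum_add hsad hsd, htd, add_zero]

/-- Key TV / event inequality. -/
lemma probEvent_le_add_tv (P1 P2 : PMF X) (E : Set X) :
    (probEvent P1 E).toReal ≤ (probEvent P2 E).toReal + tv P1 P2 := by
  rw [probEvent_toReal, probEvent_toReal, tv_eq]
  have hsd : Summable (fun x => fR P1 x - fR P2 x) := (summable_fR P1).sub (summable_fR P2)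
  have htd : ∑' x, (fR P1 x - fR P2 x) = 0 := by
    rw [Summable.tsum_sub (summable_fR P1) (summable_fR P2), tsum_fR, tsum_fR, sub_self]
  have h1 : ∑' x, E.indicator (fR P1) x - ∑' x, E.indicator (fR P2) x
      = ∑' x, E.indicator (fun x => fR P1 x - fR P2 x) x := by
    rw [← Summable.tsum_sub ((summable_fR P1).indicator E) ((summable_fR P2).indicator E)]
    exact tsum_congr fun x => by by_cases h : x ∈ E <;> simp [Set.indicator, h]
  have h2 := indicator_tsum_le_half _ hsd htd E
  linarith [h1, h2]

end Stmt4Aux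

/-- If `(V1,V2)` successfully `(γ,ζ)`-confuses `C`-generated samples of size
`m`, then every learner `A` fails on some `r ∈ C` against `V1` or against `V2`:
the error exceeds `γ/2` with probability at least `1/2 − ζ/2` (over the sample and the
adversary's internal randomness). -/
theorem stmt4 {X : Type*} [Countable X] (C : Set (PMF X)) (m : ℕ)
    (γ ζ : ℝ) (hγ : γ ∈ Set.Ioo (0 : ℝ) 1) (hζ : ζ ∈ Set.Ioo (0 : ℝ) 1)
    (V1 V2 : Adversary X)
    (hconf : ConfusesPair C V1 V2 γ ζ m) :
    ∀ A : Multiset X → PMF X, ∃ r ∈ C,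
      ENNReal.ofReal (1 / 2 - ζ / 2) ≤
          probEvent ((iid r m).bind V1) {T | γ / 2 < tv (A T) r} ∨
      ENNReal.ofReal (1 / 2 - ζ / 2) ≤
          probEvent ((iid r m).bind V2) {T | γ / 2 < tv (A T) r} := by
  intro A
  by_contra hcon
  push_neg at hcon
  obtain ⟨p, hpC, Q, hQsupp, hQfar, htv⟩ := hconf
  have hζ0 : 0 < ζ := hζ.1
  have hζ1 : ζ < 1 := hζ.2
  set creal : ℝ := 1 / 2 - ζ / 2 with hcreal
  have hcpos : 0 < creal := by rw [hcreal]; linarith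
  set E : Set (Multiset X) := {T | tv (A T) p ≤ γ / 2} with hE
  set P2 : PMF (Multiset X) := (iid p m).bind V2 with hP2
  set P1mix : PMF (Multiset X) := Q.bind fun q => (iid q m).bind V1 with hP1mix
  -- the failure event for p is the complement of E
  have hEc : {T : Multiset X | γ / 2 < tv (A T) p} = Eᶜ := by
    ext T; simp [hE, not_le]
  have hp2 := (hcon p hpC).2
  rw [hEc] at hp2
  have hp2r : (probEvent P2 Eᶜ).toReal < creal :=
    (ENNReal.lt_ofReal_iff_toReal_lt (Stmt4Aux.probEvent_ne_top P2 Eᶜ)).mp hp2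
  have ha : 1 - (probEvent P2 E).toReal < creal := by
    rw [← Stmt4Aux.probEvent_compl_toReal]; exact hp2r
  -- mixture bound
  have hq_bound : ∀ q, Q q * probEvent ((iid q m).bind V1) E ≤
      Q q * ENNReal.ofReal creal := by
    intro q
    by_cases hq : q ∈ Q.support
    · refine mul_le_mul_right ?_ _
      have hsub : E ⊆ {T : Multiset X | γ / 2 < tv (A T) q} := by
        intro T hT
        by_contra hcl
        simp only [Set.mem_setOf_eq, not_lt] at hcl
        have h1 : tv p q ≤ tv p (A T) + tv (A T) q := Stmt4Aux.tv_triangle p q (A T)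
        have h2 : tv p (A T) = tv (A T) p := Stmt4Aux.tv_symm p (A T)
        have h3 : γ < tv p q := hQfar q hq
        have h4 : tv (A T) p ≤ γ / 2 := hT
        linarith
      have hmono : probEvent ((iid q m).bind V1) E ≤
          probEvent ((iid q m).bind V1) {T : Multiset X | γ / 2 < tv (A T) q} := by
        refine PMF.toOuterMeasure_mono _ ?_
        exact (Set.inter_subset_left).trans hsub
      exact hmono.trans (hcon q (hQsupp hq)).1.le
    · simp only [PMF.mem_support_iff, not_not] at hq
      simp [hq]
  have hmix : probEvent P1mix E ≤ ENNReal.ofReal creal := by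
    rw [hP1mix, probEvent, PMF.toOuterMeasure_bind_apply]
    calc ∑' q, Q q * (((iid q m).bind V1).toOuterMeasure E)
        ≤ ∑' q, Q q * ENNReal.ofReal creal := ENNReal.tsum_le_tsum hq_bound
      _ = (∑' q, Q q) * ENNReal.ofReal creal := ENNReal.tsum_mul_right
      _ = ENNReal.ofReal creal := by rw [Q.tsum_coe, one_mul]
  have hmixr : (probEvent P1mix E).toReal ≤ creal :=
    ENNReal.toReal_le_of_le_ofReal hcpos.le hmix
  -- TV step
  have hpush1 : advPush V1 (metaSample Q m) = P1mix := by
    rw [advPush, metaSample, PMF.bind_bind]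
  have hpush2 : advPush V2 (iid p m) = P2 := rfl
  rw [hpush1, hpush2] at htv
  have hdiff : (probEvent P2 E).toReal ≤ (probEvent P1mix E).toReal + tv P2 P1mix :=
    Stmt4Aux.probEvent_le_add_tv P2 P1mix E
  have hsym : tv P2 P1mix = tv P1mix P2 := Stmt4Aux.tv_symm _ _
  rw [hsym] at hdiff
  have : (probEvent P2 E).toReal ≤ creal + ζ := by
    have := htv.le
    linarith
  rw [hcreal] at ha this
  linarith
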